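/- Let G be a strongly connected directed graph on vertex set L, let p', k', i' ∈ L with k' ≠ p', and suppose every directed path from p' to i' passes through k'. Let C(p',k') be the set of all vertices lying on some directed path from p' to k' that does not pass through k' before its endpoint. Then every directed path from a vertex in C(p',k') to i' passes through k', and no directed path from k' to i' that avoids revisiting k' passes through any vertex of C(p',k') other than k' itself. -/

import Mathlib

/-- A directed path in the graph `E` from `u` to `v`: a nonempty list of distinct vertices
starting at `u`, ending at `v`, with consecutive vertices joined by edges. A path "passes
through" a vertex `w` iff `w` is a member of the list. -/
def IsDiPath {V : Type*} (E : V → V → Prop) (l : List V) (u v : V) : Prop :=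
  l.Nodup ∧ l.head? = some u ∧ l.getLast? = some v ∧ l.Chain' E

/-- `CSet E p k` : the set of all vertices lying on some directed path from `p` to `k`
that does not pass through `k` before its endpoint. -/
def CSet {V : Type*} (E : V → V → Prop) (p k : V) : Set V :=
  {v | ∃ l : List V, IsDiPath E l p k ∧ k ∉ l.dropLast ∧ v ∈ l}

/-- A suffix of a path starting at a member is a path. -/
theorem IsDiPath.suffix_of_mem {V : Type*} {E : V → V → Prop} {l : List V} {b c a : V}
    (h : IsDiPath E l b c) (ha : a ∈ l) :
    ∃ l', l' <:+ l ∧ IsDiPath E l' a c := by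
  obtain ⟨s, t, rfl⟩ := List.append_of_mem ha
  refine ⟨a :: t, ⟨s, rfl⟩, ?_, rfl, ?_, h.2.2.2.suffix ⟨s, rfl⟩⟩
  · exact (List.sublist_append_right s _).nodup h.1
  · rw [← h.2.2.1, List.getLast?_append_of_ne_nil _ (by simp)]

/-- Splicing two paths gives a path using only their vertices. -/
theorem IsDiPath.splice {V : Type*} {E : V → V → Prop} {b c : V} :
    ∀ (P : List V) (a : V), IsDiPath E P a b → ∀ Q : List V, IsDiPath E Q b c →
    ∃ R, IsDiPath E R a c ∧ ∀ x ∈ R, x ∈ P ∨ x ∈ Q := by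
  intro P
  induction P with
  | nil => intro a h; simp [IsDiPath] at h
  | cons a' P' ih =>
    intro a h Q hQ
    obtain rfl : a' = a := by simpa using h.2.1
    by_cases haQ : a' ∈ Q
    · obtain ⟨l', hs, hl'⟩ := hQ.suffix_of_mem haQ
      exact ⟨l', hl', fun x hx => Or.inr (hs.subset hx)⟩
    · have hbQ : b ∈ Q := by
        have := hQ.2.1
        cases Q with
        | nil => simp at this
        | cons q t => simp at this; simp [this]
      rcases P' with _ | ⟨a₂, P''⟩
      · obtain rfl : a' = b := by simpa [IsDiPath] using h.2.2.1
        exact absurd hbQ haQ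
      · have hP' : IsDiPath E (a₂ :: P'') a₂ b := by
          refine ⟨h.1.of_cons, rfl, ?_, h.2.2.2.tail⟩
          rw [← h.2.2.1]
          exact (List.getLast?_append_of_ne_nil (l₂ := a₂ :: P'') (by simp) (l₁ := [a'])).symm
        obtain ⟨R', hR', hsub⟩ := ih a₂ hP' Q hQ
        have hEa : E a' a₂ := (List.isChain_cons_cons.mp h.2.2.2).1
        refine ⟨a' :: R', ⟨?_, rfl, ?_, ?_⟩, ?_⟩
        · refine List.nodup_cons.mpr ⟨fun haR => ?_, hR'.1⟩
          rcases hsub a' haR with h1 | h1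
          · exact (List.nodup_cons.mp h.1).1 h1
          · exact haQ h1
        · have hne : R' ≠ [] := by
            intro hnil; rw [hnil] at hR'; simp [IsDiPath] at hR'
          rw [← hR'.2.2.1]
          exact List.getLast?_append_of_ne_nil (l₂ := R') hne (l₁ := [a'])
        · refine List.isChain_cons.mpr ?_
          refine ⟨fun y hy => ?_, hR'.2.2.2⟩
          rw [hR'.2.1] at hy
          obtain rfl : a₂ = y := by simpa using hy
          exact hEa
        · intro x hx
          rcases List.mem_cons.mp hx with rfl | hx
          · exact Or.inl List.mem_cons_self
          · rcases hsub x hx with h1 | h1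
            · exact Or.inl (List.mem_cons_of_mem _ h1)
            · exact Or.inr h1

/-- Let `G = (L, E)` be strongly connected, `p', k', i' ∈ L` with `k' ≠ p'`,
and suppose every directed path from `p'` to `i'` passes through `k'`. Then every directed
path from a vertex of `C(p',k')` to `i'` passes through `k'`, and no directed path from
`k'` to `i'` (paths have distinct vertices, so `k'` is not revisited) passes through any
vertex of `C(p',k')` other than `k'` itself. -/
theorem paths_through_kprime {V : Type*} [Fintype V] (E : V → V → Prop)
    (hsc : ∀ u v : V, Relation.ReflTransGen E u v)
    (p' k' i' : V) (hne : k' ≠ p')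
    (hmain : ∀ l : List V, IsDiPath E l p' i' → k' ∈ l) :
    (∀ v ∈ CSet E p' k', ∀ l : List V, IsDiPath E l v i' → k' ∈ l) ∧
    (∀ l : List V, IsDiPath E l k' i' → ∀ v ∈ l, v ∈ CSet E p' k' → v = k') := by
  have claim1 : ∀ v ∈ CSet E p' k', ∀ l : List V, IsDiPath E l v i' → k' ∈ l := by
    rintro v ⟨m, hm, hkm, hvm⟩ l hl
    by_contra hkl
    by_cases hvk : v = k'
    · subst hvk
      apply hkl
      have := hl.2.1
      cases l with
      | nil => simp at this
      | cons q t => simp at this; simp [this]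
    · obtain ⟨m₁, m₂, rfl⟩ := List.append_of_mem hvm
      rcases m₂ with _ | ⟨w, m₂'⟩
      · exact hvk (by simpa using hm.2.2.1)
      · have hPpath : IsDiPath E (m₁ ++ [v]) p' v := by
          refine ⟨?_, ?_, by simp, ?_⟩
          · have : List.Sublist (m₁ ++ [v]) (m₁ ++ v :: w :: m₂') := by
              apply List.Sublist.append_left
              simp
            exact this.nodup hm.1
          · rw [← hm.2.1]; cases m₁ <;> simp
          · exact hm.2.2.2.prefix ⟨w :: m₂', by simp⟩
        have hkP : k' ∉ m₁ ++ [v] := by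
          intro hk
          apply hkm
          rw [List.dropLast_append_of_ne_nil (by simp)]
          rcases List.mem_append.mp hk with h1 | h1
          · exact List.mem_append.mpr (Or.inl h1)
          · simp at h1; subst h1; simp
        obtain ⟨R, hR, hsub⟩ := IsDiPath.splice (m₁ ++ [v]) p' hPpath l hl
        rcases hsub k' (hmain R hR) with h1 | h1
        · exact hkP h1
        · exact hkl h1
  refine ⟨claim1, ?_⟩
  rintro l hl v hvl hvC
  by_contra hvk
  obtain ⟨l', hs, hl'⟩ := hl.suffix_of_mem hvl
  have hkl' : k' ∉ l' := by
    obtain ⟨t, hlt⟩ : ∃ t, l = k' :: t := by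
      have := hl.2.1
      cases l with
      | nil => simp at this
      | cons q t => simp at this; exact ⟨t, by rw [this]⟩
    subst hlt
    rcases List.suffix_cons_iff.mp hs with h1 | h1
    · have : l'.head? = some k' := by rw [h1]; rfl
      rw [hl'.2.1] at this
      exact fun _ => hvk (by simpa using this)
    · intro hk
      exact (List.nodup_cons.mp hl.1).1 (h1.subset hk)
  exact hkl' (claim1 v hvC l' hl')
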